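/- arXiv:2511.20125 — 4 statements merged into one kernel-verified Lean document; each statement's English description precedes it below -/
import Mathlib

section
/- Let τ ≥ 1 be a natural number, let u be a distinguished vertex of V, and let G be a graph on V in which u is isolated and every vertex other than u has degree exactly τ. Let G' be obtained from G by adding the edge {u, v} for every vertex v ≠ u, and let n = |V| − 1. Then NaiveClip(G, τ) = G, NaiveClip(G', τ) has no edges, and consequently d_edge(NaiveClip(G, τ), NaiveClip(G', τ)) = nτ/2. In particular, naive clipping is not distance-preserving between node-neighboring graphs. -/
open scoped symmDiff

variable {V : Type*}

noncomputable section

/-- Degree of a vertex `v` in `G`. -/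
def deg [Fintype V] (G : SimpleGraph V) (v : V) : ℕ :=
  (G.neighborSet v).ncard

/-- Maximum degree of `G`. -/
def maxDeg [Fintype V] (G : SimpleGraph V) : ℕ :=
  Finset.univ.sup (deg G)

/-- Number of vertices of `G` with degree at least `τ`. -/
def Ntau [Fintype V] (G : SimpleGraph V) (τ : ℕ) : ℕ :=
  {v : V | τ ≤ deg G v}.ncard

/-- Edge distance: the number of edges in the symmetric difference of the edge sets. -/
def edgeDist (G G' : SimpleGraph V) : ℕ :=
  (G.edgeSet ∆ G'.edgeSet).ncard

/-- Lexicographic key of an edge: the unordered pair written with its smaller endpoint first,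
compared lexicographically. -/
def edgeKey [LinearOrder V] (e : Sym2 V) : Lex (V × V) :=
  Sym2.lift ⟨fun a b => toLex (min a b, max a b), fun a b => by simp only []; rw [min_comm, max_comm]⟩ e

/-- `e` is among the `τ` smallest edges (in the fixed lexicographic order) incident to `v`
in `G`. -/
def clipKeep [Fintype V] [LinearOrder V] (G : SimpleGraph V) (τ : ℕ) (v : V)
    (e : Sym2 V) : Prop :=
  {e' ∈ G.incidenceSet v | edgeKey e' ≤ edgeKey e}.ncard ≤ τ

/-- The clipped graph `Clip G τ`: an edge of `G` is retained iff, for each of its two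
endpoints `v`, it is among the `τ` smallest edges incident to `v` in `G`. -/
def Clip [Fintype V] [LinearOrder V] (G : SimpleGraph V) (τ : ℕ) : SimpleGraph V where
  Adj a b := G.Adj a b ∧ clipKeep G τ a s(a, b) ∧ clipKeep G τ b s(a, b)
  symm := by
    constructor
    intro a b h
    refine ⟨h.1.symm, ?_, ?_⟩
    · rw [Sym2.eq_swap]; exact h.2.2
    · rw [Sym2.eq_swap]; exact h.2.1
  loopless := ⟨fun a h => G.loopless.irrefl a h.1⟩

/-- Naive clipping: delete every edge having at least one endpoint of degree `> τ` in `G`. -/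
def NaiveClip [Fintype V] (G : SimpleGraph V) (τ : ℕ) : SimpleGraph V where
  Adj a b := G.Adj a b ∧ deg G a ≤ τ ∧ deg G b ≤ τ
  symm := ⟨fun _ _ h => ⟨h.1.symm, h.2.2, h.2.1⟩⟩
  loopless := ⟨fun a h => G.loopless.irrefl a h.1⟩

/-- The graph obtained from `G` by deleting all vertices in `S` together with their
incident edges. -/
def deleteVerts (G : SimpleGraph V) (S : Set V) : SimpleGraph V where
  Adj a b := G.Adj a b ∧ a ∉ S ∧ b ∉ S
  symm := ⟨fun _ _ h => ⟨h.1.symm, h.2.2, h.2.1⟩⟩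
  loopless := ⟨fun a h => G.loopless.irrefl a h.1⟩

/-- `DelN G τ`: the minimum cardinality of a vertex set whose deletion bounds the maximum
degree of `G` by `τ`. (The paper's `Q_Del-N(G, τ)` equals `-DelN G τ`.) -/
def DelN [Fintype V] (G : SimpleGraph V) (τ : ℕ) : ℕ :=
  sInf {n | ∃ S : Set V, S.ncard = n ∧ maxDeg (deleteVerts G S) ≤ τ}

/-- Total excess of vertex degrees over `τ`. (The paper's `Q_Del-Deg(G, τ)` equals
`-fExcess G τ / 2`.) -/
def fExcess [Fintype V] (G : SimpleGraph V) (τ : ℕ) : ℕ :=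
  ∑ v, (deg G v - τ)

/-- A `τ`-feasible pair `(x, y)` for the LP relaxation of node deletion. -/
structure IsFeasible [Fintype V] (G : SimpleGraph V) (τ : ℕ) (x : V → ℝ)
    (y : Sym2 V → ℝ) : Prop where
  x_mem : ∀ v, x v ∈ Set.Icc (0 : ℝ) 1
  y_mem : ∀ e ∈ G.edgeSet, y e ∈ Set.Icc (0 : ℝ) 1
  edge_cons : ∀ a b, G.Adj a b → 1 - x a - x b ≤ y s(a, b)
  deg_cons : ∀ v, ∑ᶠ e ∈ G.incidenceSet v, y e ≤ (τ : ℝ)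

/-- The LP value: infimum of `Σ_v x_v` over all `τ`-feasible pairs.
(The paper's `Q_LP-Del-N(G, τ)` equals `-LPDelN G τ`.) -/
def LPDelN [Fintype V] (G : SimpleGraph V) (τ : ℕ) : ℝ :=
  sInf {t : ℝ | ∃ x y, IsFeasible G τ x y ∧ t = ∑ v, x v}

/-- Let `τ ≥ 1`, let `u` be isolated in `G` and every other vertex have
degree exactly `τ`, and let `G'` add to `G` the edge `{u, v}` for every `v ≠ u`. Then
`NaiveClip G τ = G`, `NaiveClip G' τ` has no edges, and the edge distance between the two
naively clipped graphs is `(|V| - 1) · τ / 2`: naive clipping is not distance-preserving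
between node-neighboring graphs. -/
theorem naiveClip_not_distance_preserving [Fintype V]
    (G G' : SimpleGraph V) (u : V) (τ : ℕ) (hτ : 1 ≤ τ)
    (hu : deg G u = 0)
    (hdeg : ∀ v : V, v ≠ u → deg G v = τ)
    (hG' : ∀ a b : V, G'.Adj a b ↔ G.Adj a b ∨ (a = u ∧ b ≠ u) ∨ (b = u ∧ a ≠ u)) :
    NaiveClip G τ = G ∧ NaiveClip G' τ = ⊥ ∧
      edgeDist (NaiveClip G τ) (NaiveClip G' τ) = (Fintype.card V - 1) * τ / 2 := by
  classical
  have hdegdef : ∀ (H : SimpleGraph V) (v : V), deg H v = H.degree v := by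
    intro H v
    rw [deg, Set.ncard_eq_toFinset_card', SimpleGraph.degree, SimpleGraph.neighborFinset_eq_filter]
    congr 1; ext w; simp
  -- u has no neighbors
  have huadj : ∀ w, ¬ G.Adj u w := by
    intro w hw
    have h0 : G.neighborSet u = ∅ := (Set.ncard_eq_zero (Set.toFinite _)).mp hu
    exact absurd hw (by simp [← SimpleGraph.mem_neighborSet, h0])
  have hle : ∀ v, deg G v ≤ τ := by
    intro v
    by_cases hv : v = u
    · simp [hv, hu]
    · rw [hdeg v hv]
  -- part 1
  have h1 : NaiveClip G τ = G := by
    ext a b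
    simp only [NaiveClip]
    exact ⟨fun h => h.1, fun h => ⟨h, hle a, hle b⟩⟩
  -- degrees in G'
  have hdeg' : ∀ v, v ≠ u → deg G' v = τ + 1 := by
    intro v hv
    have hset : G'.neighborSet v = insert u (G.neighborSet v) := by
      ext w
      simp only [SimpleGraph.mem_neighborSet, hG', Set.mem_insert_iff]
      constructor
      · rintro (h | ⟨h, _⟩ | ⟨h, _⟩)
        · exact Or.inr h
        · exact absurd h hv
        · exact Or.inl h
      · rintro (rfl | h)
        · exact Or.inr (Or.inr ⟨rfl, hv⟩)
        · exact Or.inl h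
    have hnotmem : u ∉ G.neighborSet v := fun h => huadj v h.symm
    rw [deg, hset, Set.ncard_insert_of_notMem hnotmem (Set.toFinite _), ← deg, hdeg v hv]
  -- part 2
  have h2 : NaiveClip G' τ = ⊥ := by
    ext a b
    simp only [NaiveClip, SimpleGraph.bot_adj, iff_false]
    rintro ⟨hab, ha, hb⟩
    rcases eq_or_ne a u with hau | hau
    · have hbu : b ≠ u := fun h => G'.ne_of_adj hab (hau.trans h.symm)
      rw [hdeg' b hbu] at hb; omega
    · rw [hdeg' a hau] at ha; omega
  refine ⟨h1, h2, ?_⟩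
  rw [h1, h2, edgeDist]
  have hbot : (⊥ : SimpleGraph V).edgeSet = ∅ := SimpleGraph.edgeSet_bot
  rw [hbot]
  have hsd : G.edgeSet ∆ (∅ : Set (Sym2 V)) = G.edgeSet := by simp
  rw [hsd]
  have hcard : G.edgeSet.ncard = G.edgeFinset.card := by
    rw [Set.ncard_eq_toFinset_card']
    congr 1
  have hsum : ∑ v, G.degree v = 2 * G.edgeFinset.card :=
    SimpleGraph.sum_degrees_eq_twice_card_edges G
  have hsum2 : ∑ v, G.degree v = (Fintype.card V - 1) * τ := by
    rw [← Finset.sum_erase_add _ _ (Finset.mem_univ u)]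
    rw [← hdegdef, hu, add_zero]
    rw [Finset.sum_congr rfl (fun v hv => by
      rw [← hdegdef, hdeg v (Finset.ne_of_mem_erase hv)])]
    rw [Finset.sum_const, smul_eq_mul, Finset.card_erase_of_mem (Finset.mem_univ u),
      Finset.card_univ]
  rw [hcard]
  omega

end
end

section
/- Let G = (V, E) be a graph, τ ∈ ℕ, and let (x, y) be a τ-feasible pair for G. Let S = {v ∈ V : x_v > 1/3}. Then |S| ≤ 3 · Σ_{v ∈ V} x_v, and the graph obtained from G by deleting all vertices in S together with their incident edges has maximum degree at most 3τ. -/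
open scoped symmDiff

variable {V : Type*}

noncomputable section

/-- For a `τ`-feasible pair `(x, y)` and `S = {v | x_v > 1/3}`, one has
`|S| ≤ 3 Σ_v x_v`, and deleting `S` from `G` yields a graph of maximum degree at most
`3τ`. -/
theorem lp_rounding [Fintype V] (G : SimpleGraph V) (τ : ℕ)
    (x : V → ℝ) (y : Sym2 V → ℝ) (hf : IsFeasible G τ x y) :
    (({v : V | (1 : ℝ) / 3 < x v}).ncard : ℝ) ≤ 3 * ∑ v, x v ∧
      maxDeg (deleteVerts G {v : V | (1 : ℝ) / 3 < x v}) ≤ 3 * τ := by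

  classical
  set S : Set V := {v : V | (1 : ℝ) / 3 < x v} with hS
  constructor
  · have hSfin : S.Finite := Set.toFinite S
    have h1 : (S.ncard : ℝ) = ∑ v ∈ hSfin.toFinset, (1 : ℝ) := by
      rw [Finset.sum_const, Set.ncard_eq_toFinset_card _ hSfin]
      simp
    rw [h1]
    have h2 : ∑ v ∈ hSfin.toFinset, (1 : ℝ) ≤ ∑ v ∈ hSfin.toFinset, 3 * x v := by
      apply Finset.sum_le_sum
      intro v hv
      have : (1:ℝ)/3 < x v := by simpa [hS] using (hSfin.mem_toFinset.mp hv)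
      linarith
    have h3 : ∑ v ∈ hSfin.toFinset, 3 * x v ≤ ∑ v : V, 3 * x v := by
      apply Finset.sum_le_sum_of_subset_of_nonneg (Finset.subset_univ _)
      intro v _ _
      have := (hf.x_mem v).1
      linarith
    have h4 : 3 * ∑ v : V, x v = ∑ v : V, 3 * x v := Finset.mul_sum _ _ _
    linarith
  · rw [maxDeg]
    apply Finset.sup_le
    intro v _
    set G' := deleteVerts G S with hG'
    -- incidence sets
    have hsub : G'.incidenceSet v ⊆ G.incidenceSet v := by
      intro e he
      exact ⟨(SimpleGraph.edgeSet_subset_edgeSet.mpr (fun a b h => (show (deleteVerts G S).Adj a b from h).1) : G'.edgeSet ⊆ G.edgeSet) he.1, he.2⟩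
    have hAfin : (G.incidenceSet v).Finite := Set.toFinite _
    have hBfin : (G'.incidenceSet v).Finite := Set.toFinite _
    set A := hAfin.toFinset
    set B := hBfin.toFinset
    have hBA : B ⊆ A := by
      intro e he
      exact hAfin.mem_toFinset.mpr (hsub (hBfin.mem_toFinset.mp he))
    -- each edge of G' incident to v has y ≥ 1/3
    have hy13 : ∀ e ∈ B, (1:ℝ)/3 ≤ y e := by
      intro e he
      have he' : e ∈ G'.incidenceSet v := hBfin.mem_toFinset.mp he
      obtain ⟨⟨a, b⟩, rfl⟩ := e.exists_rep
      have hadj : (deleteVerts G S).Adj a b := he'.1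
      have hxa : x a ≤ 1/3 := le_of_not_gt (by simpa [hS] using hadj.2.1)
      have hxb : x b ≤ 1/3 := le_of_not_gt (by simpa [hS] using hadj.2.2)
      have := hf.edge_cons a b hadj.1
      linarith
    -- y nonneg on A
    have hy0 : ∀ e ∈ A, (0:ℝ) ≤ y e := by
      intro e he
      exact (hf.y_mem e ((hAfin.mem_toFinset.mp he).1)).1
    -- sum bound
    have hsum : ∑ e ∈ A, y e ≤ (τ : ℝ) := by
      have := hf.deg_cons v
      rwa [finsum_mem_eq_finite_toFinset_sum y hAfin] at this
    have hBcard : (B.card : ℝ) * (1/3) ≤ ∑ e ∈ B, y e := by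
      calc (B.card : ℝ) * (1/3) = ∑ _e ∈ B, (1:ℝ)/3 := by
            rw [Finset.sum_const, nsmul_eq_mul]
        _ ≤ ∑ e ∈ B, y e := Finset.sum_le_sum hy13
    have hBsub : ∑ e ∈ B, y e ≤ ∑ e ∈ A, y e :=
      Finset.sum_le_sum_of_subset_of_nonneg hBA (fun e he _ => hy0 e he)
    -- deg G' v = B.card
    have hdeg : deg G' v = B.card := by
      rw [deg, ← Set.ncard_eq_toFinset_card _ hBfin]
      have : Nat.card (G'.neighborSet v) = Nat.card (G'.incidenceSet v) :=
        Nat.card_congr (G'.incidenceSetEquivNeighborSet v).symm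
      simpa only [Nat.card_coe_set_eq] using this
    have hfinal : (deg G' v : ℝ) ≤ 3 * τ := by
      rw [hdeg]
      nlinarith [hBcard, hBsub, hsum]
    exact_mod_cast (by push_cast at hfinal ⊢; linarith : ((deg G' v : ℝ)) ≤ ((3*τ : ℕ) : ℝ))


end
end

section
/- Let G = (V, E) be a graph and τ ∈ ℕ. For every τ-feasible pair (x, y) for G, one has DelN(G, 3τ) ≤ 3 · Σ_{v ∈ V} x_v. -/
open scoped symmDiff

variable {V : Type*}

noncomputable section

/-- For every `τ`-feasible pair `(x, y)` for `G`,
`DelN(G, 3τ) ≤ 3 Σ_v x_v`. -/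
theorem delN_le_of_feasible [Fintype V] (G : SimpleGraph V) (τ : ℕ)
    (x : V → ℝ) (y : Sym2 V → ℝ) (hf : IsFeasible G τ x y) :
    (DelN G (3 * τ) : ℝ) ≤ 3 * ∑ v, x v := by
  classical
  set S : Set V := {v | (1 : ℝ) / 3 ≤ x v} with hS
  have hSfin : S.Finite := Set.toFinite _
  -- Deleting S bounds the max degree by 3τ
  have hdeg : ∀ v, deg (deleteVerts G S) v ≤ 3 * τ := by
    intro v
    by_cases hvS : v ∈ S
    · have hempty : (deleteVerts G S).neighborSet v = ∅ := by
        ext u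
        simp only [SimpleGraph.mem_neighborSet, Set.mem_empty_iff_false, iff_false]
        intro h
        exact h.2.1 hvS
      simp [deg, hempty]
    · have hxv : x v < 1 / 3 := not_le.mp hvS
      have hNfin : ((deleteVerts G S).neighborSet v).Finite := Set.toFinite _
      set Nf : Finset V := hNfin.toFinset with hNf
      have hIfin : (G.incidenceSet v).Finite := Set.toFinite _
      set If : Finset (Sym2 V) := hIfin.toFinset with hIf
      have hinj : Set.InjOn (fun u => s(v, u)) Nf := by
        intro a _ b _ hab
        exact Sym2.congr_right.mp hab
      have hsub : Nf.image (fun u => s(v, u)) ⊆ If := by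
        intro e he
        obtain ⟨u, hu, rfl⟩ := Finset.mem_image.mp he
        have hu' : (deleteVerts G S).Adj v u := by
          simpa [hNf, SimpleGraph.mem_neighborSet] using hu
        simp only [hIf, Set.Finite.mem_toFinset]
        exact G.mem_incidenceSet v u |>.mpr hu'.1
      have hkey : (Nf.card : ℝ) * (1 / 3) ≤ ∑ e ∈ If, y e := by
        calc (Nf.card : ℝ) * (1 / 3) = ∑ _u ∈ Nf, (1 / 3 : ℝ) := by
              simp [mul_comm]
          _ ≤ ∑ u ∈ Nf, y s(v, u) := by
              apply Finset.sum_le_sum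
              intro u hu
              have hu' : (deleteVerts G S).Adj v u := by
                simpa [hNf, SimpleGraph.mem_neighborSet] using hu
              have hxu : x u < 1 / 3 := not_le.mp hu'.2.2
              have := hf.edge_cons v u hu'.1
              linarith
          _ = ∑ e ∈ Nf.image (fun u => s(v, u)), y e := (Finset.sum_image hinj).symm
          _ ≤ ∑ e ∈ If, y e := by
              apply Finset.sum_le_sum_of_subset_of_nonneg hsub
              intro e he _
              have he' : e ∈ G.edgeSet := by
                have : e ∈ G.incidenceSet v := by simpa [hIf] using he
                exact this.1
              exact (hf.y_mem e he').1
      have hsum : ∑ e ∈ If, y e ≤ (τ : ℝ) := by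
        have := hf.deg_cons v
        rwa [finsum_mem_eq_finite_toFinset_sum _ hIfin] at this
      have hcard : (Nf.card : ℝ) ≤ 3 * τ := by linarith
      have hcardn : Nf.card ≤ 3 * τ := by exact_mod_cast hcard
      have hdegeq : deg (deleteVerts G S) v = Nf.card := by
        simp [deg, Set.ncard_eq_toFinset_card _ hNfin, hNf]
      omega
  have hmax : maxDeg (deleteVerts G S) ≤ 3 * τ :=
    Finset.sup_le fun v _ => hdeg v
  have h1 : DelN G (3 * τ) ≤ S.ncard :=
    Nat.sInf_le ⟨S, rfl, hmax⟩
  have h2 : (S.ncard : ℝ) ≤ 3 * ∑ v, x v := by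
    have hcard : S.ncard = hSfin.toFinset.card := Set.ncard_eq_toFinset_card _ hSfin
    have hsum1 : (hSfin.toFinset.card : ℝ) * (1 / 3) ≤ ∑ v ∈ hSfin.toFinset, x v := by
      calc (hSfin.toFinset.card : ℝ) * (1/3) = ∑ _v ∈ hSfin.toFinset, (1/3 : ℝ) := by
            simp [mul_comm]
        _ ≤ ∑ v ∈ hSfin.toFinset, x v := by
            apply Finset.sum_le_sum
            intro v hv
            simpa [hS] using (hSfin.mem_toFinset.mp hv)
    have hsum2 : ∑ v ∈ hSfin.toFinset, x v ≤ ∑ v, x v := by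
      apply Finset.sum_le_sum_of_subset_of_nonneg (Finset.subset_univ _)
      intro v _ _
      exact (hf.x_mem v).1
    rw [hcard]
    linarith
  calc (DelN G (3 * τ) : ℝ) ≤ (S.ncard : ℝ) := by exact_mod_cast h1
    _ ≤ 3 * ∑ v, x v := h2

end
end

section
/- For every graph G on V and every τ ∈ ℕ, DelN(G, 3τ) ≤ 3 · LPDelN(G, τ). (Equivalently, in the paper's notation, |Q_Del-N(G, 3τ)| ≤ 3 · |Q_LP-Del-N(G, τ)|.) -/
open scoped symmDiff

variable {V : Type*}

noncomputable section

/-- `DelN(G, 3τ) ≤ 3 · LPDelN(G, τ)`; equivalently, in the paper's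
notation, `|Q_Del-N(G, 3τ)| ≤ 3 · |Q_LP-Del-N(G, τ)|`. -/
theorem delN_le_three_mul_lpDelN [Fintype V] (G : SimpleGraph V) (τ : ℕ) :
    (DelN G (3 * τ) : ℝ) ≤ 3 * LPDelN G τ := by
  classical
  have key : ∀ x y, IsFeasible G τ x y → (DelN G (3 * τ) : ℝ) ≤ 3 * ∑ v, x v := by
    intro x y hxy
    set S : Set V := {v | (1:ℝ)/3 ≤ x v} with hSdef
    have hdeg : ∀ v, deg (deleteVerts G S) v ≤ 3 * τ := by
      intro v
      by_cases hvS : v ∈ S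
      · have hempty : (deleteVerts G S).neighborSet v = ∅ := by
          ext u
          simp only [SimpleGraph.mem_neighborSet, Set.mem_empty_iff_false, iff_false]
          intro h
          exact (show G.Adj v u ∧ v ∉ S ∧ u ∉ S from h).2.1 hvS
        simp [deg, hempty]
      · have hxv : x v < 1/3 := lt_of_not_ge hvS
        set A : Finset (Sym2 V) :=
          (G.incidenceSet v).toFinset.filter (fun e => 1/3 < y e) with hA
        have himg : (fun u => s(v, u)) '' ((deleteVerts G S).neighborSet v)
            ⊆ (↑A : Set (Sym2 V)) := by
          rintro e ⟨u, hu, rfl⟩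
          obtain ⟨hadj, hvs, hus⟩ := (show G.Adj v u ∧ v ∉ S ∧ u ∉ S from hu)
          have hxu : x u < 1/3 := lt_of_not_ge hus
          have hinc : s(v, u) ∈ G.incidenceSet v :=
            (G.mk'_mem_incidenceSet_iff).mpr ⟨hadj, Or.inl rfl⟩
          have hy : 1/3 < y s(v, u) := by
            have := hxy.edge_cons v u hadj
            linarith
          simp only [hA, Finset.coe_filter, Set.mem_setOf_eq, Set.mem_toFinset]
          exact ⟨hinc, hy⟩
        have hinj : Function.Injective (fun u : V => s(v, u)) := by
          intro a b hab
          simpa using (Sym2.congr_right).mp hab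
        have hdegA : deg (deleteVerts G S) v ≤ A.card := by
          have h1 : ((fun u => s(v, u)) '' ((deleteVerts G S).neighborSet v)).ncard
              ≤ (↑A : Set (Sym2 V)).ncard :=
            Set.ncard_le_ncard himg A.finite_toSet
          rwa [Set.ncard_image_of_injective _ hinj, Set.ncard_coe_finset] at h1
        have hsum : (A.card : ℝ) * (1/3) ≤ ∑ e ∈ A, y e := by
          have := Finset.card_nsmul_le_sum A y (1/3)
            (fun e he => le_of_lt (Finset.mem_filter.mp he).2)
          simpa [nsmul_eq_mul] using this
        have hsub : ∑ e ∈ A, y e ≤ ∑ e ∈ (G.incidenceSet v).toFinset, y e := by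
          refine Finset.sum_le_sum_of_subset_of_nonneg (Finset.filter_subset _ _) ?_
          intro e he _
          exact (hxy.y_mem e (G.incidenceSet_subset v (Set.mem_toFinset.mp he))).1
        have hfin : ∑ e ∈ (G.incidenceSet v).toFinset, y e ≤ (τ : ℝ) := by
          have := hxy.deg_cons v
          rwa [← Set.coe_toFinset (G.incidenceSet v), finsum_mem_coe_finset] at this
        have hAcard : (A.card : ℝ) ≤ 3 * τ := by linarith
        have hAcard' : A.card ≤ 3 * τ := by exact_mod_cast hAcard
        exact le_trans hdegA hAcard'
    have hmax : maxDeg (deleteVerts G S) ≤ 3 * τ :=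
      Finset.sup_le fun v _ => hdeg v
    have hDel : DelN G (3 * τ) ≤ S.ncard := Nat.sInf_le ⟨S, rfl, hmax⟩
    have hxnn : ∀ v, 0 ≤ x v := fun v => (hxy.x_mem v).1
    have hScard : (S.ncard : ℝ) * (1/3) ≤ ∑ v, x v := by
      rw [Set.ncard_eq_toFinset_card' S]
      calc (S.toFinset.card : ℝ) * (1/3) ≤ ∑ v ∈ S.toFinset, x v := by
            have hlb : ∀ v ∈ S.toFinset, (1:ℝ)/3 ≤ x v := by
              intro v hv
              have hvS : v ∈ S := Set.mem_toFinset.mp hv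
              exact hvS
            have h := Finset.card_nsmul_le_sum S.toFinset x (1/3) hlb
            rwa [nsmul_eq_mul] at h
        _ ≤ ∑ v, x v := Finset.sum_le_sum_of_subset_of_nonneg (Finset.subset_univ _)
              (fun v _ _ => hxnn v)
    have hDel' : (DelN G (3 * τ) : ℝ) ≤ (S.ncard : ℝ) := by exact_mod_cast hDel
    linarith
  have hne : {t : ℝ | ∃ x y, IsFeasible G τ x y ∧ t = ∑ v, x v}.Nonempty := by
    refine ⟨∑ _v : V, (1:ℝ), fun _ => 1, fun _ => 0, ⟨?_, ?_, ?_, ?_⟩, rfl⟩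
    · exact fun v => ⟨zero_le_one, le_refl 1⟩
    · exact fun e _ => ⟨le_refl 0, zero_le_one⟩
    · intro a b _; norm_num
    · intro v
      simp
  have h2 : (DelN G (3 * τ) : ℝ) / 3 ≤ LPDelN G τ := by
    refine le_csInf hne ?_
    rintro t ⟨x, y, hf, rfl⟩
    linarith [key x y hf]
  linarith

end
end
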